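/- There is a subsequence of the sequence of prime numbers that converges to 1 with respect to the Fürstenberg topology on ℤ. Equivalently, 1 is a cluster point of the sequence of primes in the Fürstenberg topology. -/
import Mathlib


/-- The Fürstenberg topology on ℤ, generated by arithmetic progressions a + bℤ (b ≥ 1). -/
def furstenbergTopology : TopologicalSpace ℤ :=
  TopologicalSpace.generateFrom
    {S | ∃ a b : ℤ, 0 < b ∧ S = {x : ℤ | ∃ n : ℤ, x = a + b * n}}



/-- An auxiliary sequence of primes: `auxQ n` is a prime greater than `auxQ (n-1)`
congruent to 1 modulo `(n+1)!`. -/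
noncomputable def auxQ : ℕ → ℕ
  | 0 => (Nat.exists_prime_gt_modEq_one (k := Nat.factorial 1) 0 (by positivity)).choose
  | n + 1 => (Nat.exists_prime_gt_modEq_one (k := Nat.factorial (n + 2)) (auxQ n) (by positivity)).choose

lemma auxQ_prime (n : ℕ) : (auxQ n).Prime := by
  cases n with
  | zero => exact (Nat.exists_prime_gt_modEq_one (k := Nat.factorial 1) 0 (by positivity)).choose_spec.1
  | succ n =>
    exact (Nat.exists_prime_gt_modEq_one (k := Nat.factorial (n + 2)) (auxQ n) (by positivity)).choose_spec.1

lemma auxQ_modEq (n : ℕ) : auxQ n ≡ 1 [MOD Nat.factorial (n + 1)] := by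
  cases n with
  | zero => exact (Nat.exists_prime_gt_modEq_one (k := Nat.factorial 1) 0 (by positivity)).choose_spec.2.2
  | succ n =>
    exact (Nat.exists_prime_gt_modEq_one (k := Nat.factorial (n + 2)) (auxQ n) (by positivity)).choose_spec.2.2

lemma auxQ_strictMono : StrictMono auxQ := by
  apply strictMono_nat_of_lt_succ
  intro n
  exact (Nat.exists_prime_gt_modEq_one (k := Nat.factorial (n + 2)) (auxQ n) (by positivity)).choose_spec.2.1

theorem stmt_16 (p : ℕ → ℕ) (hmono : StrictMono p) (hprime : ∀ n, (p n).Prime)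
    (hall : ∀ r : ℕ, r.Prime → ∃ n, p n = r) :
    letI : TopologicalSpace ℤ := furstenbergTopology
    (∃ φ : ℕ → ℕ, StrictMono φ ∧
      Filter.Tendsto (fun n => ((p (φ n) : ℤ))) Filter.atTop (nhds 1)) ∧
    MapClusterPt (1 : ℤ) Filter.atTop (fun n => ((p n : ℤ))) := by
  choose φ hφ using fun n => hall (auxQ n) (auxQ_prime n)
  have hφmono : StrictMono φ := by
    intro m n hmn
    have : p (φ m) < p (φ n) := by rw [hφ m, hφ n]; exact auxQ_strictMono hmn
    exact hmono.lt_iff_lt.mp this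
  have htend : Filter.Tendsto (fun n => ((p (φ n) : ℤ))) Filter.atTop
      (@nhds ℤ furstenbergTopology 1) := by
    rw [furstenbergTopology, TopologicalSpace.tendsto_nhds_generateFrom_iff]
    rintro S ⟨a, b, hb, rfl⟩ ⟨n₀, hn₀⟩
    rw [Filter.mem_atTop_sets]
    refine ⟨b.natAbs, fun n hn => ?_⟩
    have hdvd : (b : ℤ) ∣ ((Nat.factorial (n + 1)) : ℤ) := by
      rcases Nat.eq_zero_or_pos b.natAbs with h0 | h0
      · omega
      have : b.natAbs ∣ Nat.factorial (n + 1) :=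
        Nat.dvd_factorial h0 (le_trans hn (Nat.le_succ n))
      exact (Int.natAbs_dvd.mp (Int.natCast_dvd_natCast.mpr this))
    have hmod : ((Nat.factorial (n + 1)) : ℤ) ∣ ((auxQ n : ℤ) - 1) := by
      have := (Nat.modEq_iff_dvd (n := Nat.factorial (n + 1)) (a := 1) (b := auxQ n)).mp (auxQ_modEq n).symm
      simpa using this
    obtain ⟨m, hm⟩ := hdvd.trans hmod
    simp only [Set.mem_preimage, Set.mem_setOf_eq, hφ n]
    exact ⟨n₀ + m, by push_cast at hm ⊢; linarith⟩
  letI : TopologicalSpace ℤ := furstenbergTopology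
  exact ⟨⟨φ, hφmono, htend⟩,
    MapClusterPt.of_comp (Filter.tendsto_atTop_atTop_of_monotone hφmono.monotone
      (fun b => ⟨b, (hφmono.id_le b)⟩)) htend.mapClusterPt⟩
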